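/- Let D be an integral domain. The following are equivalent: (i) D is a DW-domain, i.e., every nonzero fractional ideal E of D satisfies E = E^w; (ii) every nonzero prime ideal of D is a w-ideal; (iii) every maximal ideal of D is a w-ideal; (iv) every maximal ideal of D is a t-ideal; (v) GV(D) = {D}, i.e., the only Glaz–Vasconcelos ideal of D is D itself. -/
import Mathlib


open scoped nonZeroDivisors

/-- The `t`-closure of a fractional ideal `E` of an integral domain `D`:
the union (here: supremum, which is a directed union) of `F^v = (F⁻¹)⁻¹` over all
nonzero finitely generated fractional subideals `F` of `E`, viewed as a
`D`-submodule of the fraction field of `D`. -/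
noncomputable def tClos (D : Type*) [CommRing D] [IsDomain D]
    (E : FractionalIdeal D⁰ (FractionRing D)) : Submodule D (FractionRing D) :=
  ⨆ F ∈ {F : FractionalIdeal D⁰ (FractionRing D) |
      F ≠ 0 ∧ F ≤ E ∧ (F : Submodule D (FractionRing D)).FG},
    (((F⁻¹)⁻¹ : FractionalIdeal D⁰ (FractionRing D)) : Submodule D (FractionRing D))

/-- An integral ideal `I` of an integral domain `D` is a `t`-ideal if `I = I^t`. -/
def Ideal.IsT {D : Type*} [CommRing D] [IsDomain D] (I : Ideal D) : Prop :=
  ((I : FractionalIdeal D⁰ (FractionRing D)) : Submodule D (FractionRing D)) = tClos D I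

/-- A Glaz–Vasconcelos ideal of `D`: a nonzero finitely generated integral ideal `J`
with `J⁻¹ = D`. -/
def IsGV {D : Type*} [CommRing D] [IsDomain D] (J : Ideal D) : Prop :=
  J ≠ ⊥ ∧ J.FG ∧ ((J : FractionalIdeal D⁰ (FractionRing D)))⁻¹ = 1

/-- The `w`-closure of a fractional ideal `E`:
`E^w = {x ∈ K : xJ ⊆ E for some GV-ideal J}`. -/
def wClos (D : Type*) [CommRing D] [IsDomain D]
    (E : FractionalIdeal D⁰ (FractionRing D)) : Set (FractionRing D) :=
  {x : FractionRing D | ∃ J : Ideal D, IsGV J ∧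
    ∀ j ∈ J, algebraMap D (FractionRing D) j * x ∈ E}

/-- A fractional ideal `E` is a `w`-ideal if `E = E^w`. -/
def IsW {D : Type*} [CommRing D] [IsDomain D]
    (E : FractionalIdeal D⁰ (FractionRing D)) : Prop :=
  ((E : Submodule D (FractionRing D)) : Set (FractionRing D)) = wClos D E


section DWAux

variable {D : Type*} [CommRing D] [IsDomain D]

private lemma dw_inj : Function.Injective (algebraMap D (FractionRing D)) :=
  IsFractionRing.injective D (FractionRing D)

private lemma dw_one_inv : ((1 : FractionalIdeal D⁰ (FractionRing D)))⁻¹ = 1 := by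
  rw [FractionalIdeal.inv_eq]; exact FractionalIdeal.div_one

private lemma dw_one_le_inv {F : FractionalIdeal D⁰ (FractionRing D)} (h0 : F ≠ 0) (h1 : F ≤ 1) :
    1 ≤ F⁻¹ := by
  have h := FractionalIdeal.inv_anti_mono (K := FractionRing D) h0
    (one_ne_zero' (FractionalIdeal D⁰ (FractionRing D))) h1
  rwa [dw_one_inv] at h

private lemma dw_inv_ne_zero {F : FractionalIdeal D⁰ (FractionRing D)} (h0 : F ≠ 0) (h1 : F ≤ 1) :
    F⁻¹ ≠ 0 := fun h => by simpa [h] using dw_one_le_inv h0 h1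

private lemma dw_le_v {F : FractionalIdeal D⁰ (FractionRing D)} (h0 : F ≠ 0) (h1 : F ≤ 1) :
    F ≤ (F⁻¹)⁻¹ := by
  rw [FractionalIdeal.inv_eq (I := F⁻¹)]
  exact (FractionalIdeal.le_div_iff_mul_le (dw_inv_ne_zero h0 h1)).mpr
    FractionalIdeal.mul_one_div_le_one

private lemma dw_v_le_one {F : FractionalIdeal D⁰ (FractionRing D)} (h0 : F ≠ 0) (h1 : F ≤ 1) :
    (F⁻¹)⁻¹ ≤ 1 := by
  have h := FractionalIdeal.inv_anti_mono (K := FractionRing D)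
    (one_ne_zero' (FractionalIdeal D⁰ (FractionRing D))) (dw_inv_ne_zero h0 h1)
    (dw_one_le_inv h0 h1)
  rwa [dw_one_inv] at h

private lemma dw_v_mono {F G : FractionalIdeal D⁰ (FractionRing D)} (hF : F ≠ 0) (hG : G ≠ 0)
    (hF1 : F ≤ 1) (hG1 : G ≤ 1) (h : F ≤ G) : (F⁻¹)⁻¹ ≤ (G⁻¹)⁻¹ :=
  FractionalIdeal.inv_anti_mono (dw_inv_ne_zero hG hG1) (dw_inv_ne_zero hF hF1)
    (FractionalIdeal.inv_anti_mono hF hG h)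

private lemma dw_inv_eq_one {F : FractionalIdeal D⁰ (FractionRing D)} (h0 : F ≠ 0) (h1 : F ≤ 1)
    (h : (1 : FractionRing D) ∈ (F⁻¹)⁻¹) : F⁻¹ = 1 := by
  refine le_antisymm (fun x hx => ?_) (dw_one_le_inv h0 h1)
  have hh := (FractionalIdeal.mem_inv_iff (dw_inv_ne_zero h0 h1)).mp h x hx
  rwa [one_mul] at hh

private lemma dw_isGV_top : IsGV (⊤ : Ideal D) :=
  ⟨top_ne_bot, ⟨{1}, by simp [Ideal.span_singleton_one]⟩,
    by rw [FractionalIdeal.coeIdeal_top]; exact dw_one_inv⟩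

private lemma dw_subset_wClos (E : FractionalIdeal D⁰ (FractionRing D)) :
    ((E : Submodule D (FractionRing D)) : Set (FractionRing D)) ⊆ wClos D E := by
  intro x hx
  refine ⟨⊤, dw_isGV_top, fun j _ => ?_⟩
  rw [← FractionalIdeal.mem_coe, ← Algebra.smul_def]
  exact Submodule.smul_mem _ j hx

private lemma dw_isW_zero : IsW (0 : FractionalIdeal D⁰ (FractionRing D)) := by
  refine subset_antisymm (dw_subset_wClos 0) ?_
  rintro x ⟨J, hJ, h⟩
  obtain ⟨j, hjJ, hj0⟩ := Submodule.exists_mem_ne_zero_of_ne_bot hJ.1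
  have h0 := h j hjJ
  rw [FractionalIdeal.mem_zero_iff] at h0
  have hj' : algebraMap D (FractionRing D) j ≠ 0 := fun hc =>
    hj0 (dw_inj (by rwa [_root_.map_zero]))
  have hx0 : x = 0 := by
    rcases mul_eq_zero.mp h0 with h' | h'
    · exact absurd h' hj'
    · exact h'
  simp [hx0]

private lemma dw_coe_le_tClos {M : Ideal D} :
    (((M : FractionalIdeal D⁰ (FractionRing D)) : Submodule D (FractionRing D))) ≤
      tClos D (M : FractionalIdeal D⁰ (FractionRing D)) := by
  intro x hx
  by_cases hx0 : x = 0
  · subst hx0; exact Submodule.zero_mem _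
  · set F := FractionalIdeal.spanSingleton D⁰ x with hF
    have hF0 : F ≠ 0 := FractionalIdeal.spanSingleton_ne_zero_iff.mpr hx0
    have hFle : F ≤ (M : FractionalIdeal D⁰ (FractionRing D)) :=
      FractionalIdeal.spanSingleton_le_iff_mem.mpr (FractionalIdeal.mem_coe.mp hx)
    have hFG : (F : Submodule D (FractionRing D)).FG := by
      rw [hF, FractionalIdeal.coe_spanSingleton]
      exact Submodule.fg_span_singleton x
    have hF1 : F ≤ 1 := le_trans hFle FractionalIdeal.coeIdeal_le_one
    have hxF : x ∈ ((F⁻¹)⁻¹ : FractionalIdeal D⁰ (FractionRing D)) :=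
      dw_le_v hF0 hF1 (FractionalIdeal.mem_spanSingleton_self D⁰ x)
    have hle : (((F⁻¹)⁻¹ : FractionalIdeal D⁰ (FractionRing D)) :
        Submodule D (FractionRing D)) ≤ tClos D (M : FractionalIdeal D⁰ (FractionRing D)) :=
      le_iSup₂ (f := fun (F : FractionalIdeal D⁰ (FractionRing D)) (_ : F ∈
        {F : FractionalIdeal D⁰ (FractionRing D) |
          F ≠ 0 ∧ F ≤ (M : FractionalIdeal D⁰ (FractionRing D)) ∧
          (F : Submodule D (FractionRing D)).FG}) =>
        (((F⁻¹)⁻¹ : FractionalIdeal D⁰ (FractionRing D)) : Submodule D (FractionRing D)))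
        F ⟨hF0, hFle, hFG⟩
    exact hle (FractionalIdeal.mem_coe.mpr hxF)

private lemma dw_tClos_le_one {E : FractionalIdeal D⁰ (FractionRing D)} (hE : E ≤ 1) :
    tClos D E ≤ ((1 : FractionalIdeal D⁰ (FractionRing D)) : Submodule D (FractionRing D)) := by
  refine iSup₂_le fun F hF => ?_
  obtain ⟨h0, hle, -⟩ := hF
  exact FractionalIdeal.coe_le_coe.mpr (dw_v_le_one h0 (hle.trans hE))

private lemma dw_mem_tClos {E : FractionalIdeal D⁰ (FractionRing D)} (hE0 : E ≠ 0) (hE1 : E ≤ 1)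
    {x : FractionRing D} (hx : x ∈ tClos D E) :
    ∃ F : FractionalIdeal D⁰ (FractionRing D), F ≠ 0 ∧ F ≤ E ∧
      (F : Submodule D (FractionRing D)).FG ∧
      x ∈ ((F⁻¹)⁻¹ : FractionalIdeal D⁰ (FractionRing D)) := by
  set S := {F : FractionalIdeal D⁰ (FractionRing D) |
      F ≠ 0 ∧ F ≤ E ∧ (F : Submodule D (FractionRing D)).FG} with hS
  obtain ⟨y, hyE, hy0⟩ : ∃ y ∈ (E : Submodule D (FractionRing D)), y ≠ 0 := by
    obtain ⟨y, hy, hy0⟩ := Submodule.exists_mem_ne_zero_of_ne_bot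
      (FractionalIdeal.coeToSubmodule_ne_bot.mpr hE0)
    exact ⟨y, hy, hy0⟩
  have hne : Nonempty S := ⟨⟨FractionalIdeal.spanSingleton D⁰ y,
    FractionalIdeal.spanSingleton_ne_zero_iff.mpr hy0,
    FractionalIdeal.spanSingleton_le_iff_mem.mpr (FractionalIdeal.mem_coe.mp hyE),
    by rw [FractionalIdeal.coe_spanSingleton]; exact Submodule.fg_span_singleton y⟩⟩
  have hdir : Directed (· ≤ ·) (fun F : S =>
      ((((F : FractionalIdeal D⁰ (FractionRing D))⁻¹)⁻¹ : FractionalIdeal D⁰ (FractionRing D)) :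
        Submodule D (FractionRing D))) := by
    rintro ⟨F₁, h₁0, h₁le, h₁fg⟩ ⟨F₂, h₂0, h₂le, h₂fg⟩
    have hsup0 : F₁ ⊔ F₂ ≠ 0 := fun hc => h₁0 (FractionalIdeal.le_zero_iff.mp (hc ▸ le_sup_left))
    have hsuple : F₁ ⊔ F₂ ≤ E := sup_le h₁le h₂le
    have hsupfg : ((F₁ ⊔ F₂ : FractionalIdeal D⁰ (FractionRing D)) :
        Submodule D (FractionRing D)).FG := by
      rw [FractionalIdeal.coe_sup]
      exact Submodule.FG.sup h₁fg h₂fg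
    refine ⟨⟨F₁ ⊔ F₂, hsup0, hsuple, hsupfg⟩, ?_, ?_⟩
    · exact FractionalIdeal.coe_le_coe.mpr (dw_v_mono h₁0 hsup0 (h₁le.trans hE1)
        (hsuple.trans hE1) le_sup_left)
    · exact FractionalIdeal.coe_le_coe.mpr (dw_v_mono h₂0 hsup0 (h₂le.trans hE1)
        (hsuple.trans hE1) le_sup_right)
  rw [tClos, iSup_subtype'] at hx
  obtain ⟨⟨F, hF⟩, hxF⟩ := (Submodule.mem_iSup_of_directed _ hdir).mp hx
  exact ⟨F, hF.1, hF.2.1, hF.2.2, FractionalIdeal.mem_coe.mp hxF⟩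

private lemma dw_exists_gv {M : Ideal D} (hM : M ≠ ⊥)
    (h1 : (1 : FractionRing D) ∈ tClos D (M : FractionalIdeal D⁰ (FractionRing D))) :
    ∃ J : Ideal D, IsGV J ∧ J ≤ M := by
  obtain ⟨F, hF0, hFle, hFfg, h1F⟩ := dw_mem_tClos (FractionalIdeal.coeIdeal_ne_zero.mpr hM)
    FractionalIdeal.coeIdeal_le_one h1
  obtain ⟨J, rfl⟩ := FractionalIdeal.le_one_iff_exists_coeIdeal.mp
    (hFle.trans FractionalIdeal.coeIdeal_le_one)
  exact ⟨J, ⟨FractionalIdeal.coeIdeal_ne_zero.mp hF0,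
    (FractionalIdeal.coeIdeal_fg D⁰ dw_inj J).mp hFfg,
    dw_inv_eq_one hF0 FractionalIdeal.coeIdeal_le_one h1F⟩,
    (FractionalIdeal.coeIdeal_le_coeIdeal _).mp hFle⟩

end DWAux

/-- For an integral domain `D` the following are equivalent:
(i) `D` is a DW-domain (every nonzero fractional ideal is a `w`-ideal);
(ii) every nonzero prime ideal of `D` is a `w`-ideal;
(iii) every maximal ideal of `D` is a `w`-ideal;
(iv) every maximal ideal of `D` is a `t`-ideal;
(v) `GV(D) = {D}`. -/
theorem dw_domain_tfae (D : Type*) [CommRing D] [IsDomain D] :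
    List.TFAE
      [ ∀ E : FractionalIdeal D⁰ (FractionRing D), E ≠ 0 → IsW E,
        ∀ P : Ideal D, P.IsPrime → P ≠ ⊥ →
          IsW (P : FractionalIdeal D⁰ (FractionRing D)),
        ∀ M : Ideal D, M.IsMaximal → IsW (M : FractionalIdeal D⁰ (FractionRing D)),
        ∀ M : Ideal D, M.IsMaximal → M.IsT,
        ∀ J : Ideal D, IsGV J → J = ⊤ ] := by
  tfae_have 1 → 2 := fun h P _ hP0 => h _ (FractionalIdeal.coeIdeal_ne_zero.mpr hP0)
  tfae_have 2 → 3 := by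
    intro h M hM
    by_cases hM0 : M = ⊥
    · rw [hM0, FractionalIdeal.coeIdeal_bot]
      exact dw_isW_zero
    · exact h M hM.isPrime hM0
  tfae_have 3 → 4 := by
    intro h M hM
    refine le_antisymm dw_coe_le_tClos ?_
    by_cases hM0 : M = ⊥
    · subst hM0
      refine iSup₂_le fun F hF => ?_
      obtain ⟨h0, hle, -⟩ := hF
      rw [FractionalIdeal.coeIdeal_bot, FractionalIdeal.le_zero_iff] at hle
      exact absurd hle h0
    · set I : Ideal D :=
        Submodule.comap (Algebra.linearMap D (FractionRing D))
          (tClos D (M : FractionalIdeal D⁰ (FractionRing D))) with hI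
      by_cases hItop : I = ⊤
      · exfalso
        have h1t : (1 : FractionRing D) ∈
            tClos D (M : FractionalIdeal D⁰ (FractionRing D)) := by
          have h1I : (1 : D) ∈ I := hItop ▸ Submodule.mem_top
          rw [hI] at h1I
          simpa using h1I
        obtain ⟨J, hJgv, hJle⟩ := dw_exists_gv hM0 h1t
        have h1w : (1 : FractionRing D) ∈ wClos D (M : FractionalIdeal D⁰ (FractionRing D)) :=
          ⟨J, hJgv, fun j hj => by
            rw [mul_one]
            exact FractionalIdeal.mem_coeIdeal_of_mem D⁰ (hJle hj)⟩
        rw [← h M hM] at h1w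
        obtain ⟨a, ha, ha1⟩ := (FractionalIdeal.mem_coeIdeal D⁰).mp
          (FractionalIdeal.mem_coe.mp h1w)
        have : a = 1 := dw_inj (by rw [ha1, map_one])
        exact hM.ne_top (Ideal.eq_top_of_isUnit_mem M ha (this ▸ isUnit_one))
      · have hMI : M ≤ I := fun m hm => by
          have : algebraMap D (FractionRing D) m ∈
              tClos D (M : FractionalIdeal D⁰ (FractionRing D)) :=
            dw_coe_le_tClos (FractionalIdeal.mem_coe.mpr
              (FractionalIdeal.mem_coeIdeal_of_mem D⁰ hm))
          rw [hI]
          simpa using this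
        have hIM : I = M := (hM.eq_of_le hItop hMI).symm
        intro x hx
        have hx1 : x ∈ ((1 : FractionalIdeal D⁰ (FractionRing D)) :
            Submodule D (FractionRing D)) :=
          dw_tClos_le_one FractionalIdeal.coeIdeal_le_one hx
        obtain ⟨a, rfl⟩ := (FractionalIdeal.mem_one_iff D⁰).mp
          (FractionalIdeal.mem_coe.mp hx1)
        have haI : a ∈ I := by rw [hI]; simpa using hx
        exact FractionalIdeal.mem_coe.mpr
          (FractionalIdeal.mem_coeIdeal_of_mem D⁰ (hIM ▸ haI))
  tfae_have 4 → 5 := by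
    intro h J hJ
    by_contra hJtop
    obtain ⟨M, hMmax, hJM⟩ := Ideal.exists_le_maximal J hJtop
    have hT := h M hMmax
    have hmem : (1 : FractionRing D) ∈
        (((J : FractionalIdeal D⁰ (FractionRing D))⁻¹)⁻¹ :
          FractionalIdeal D⁰ (FractionRing D)) := by
      rw [hJ.2.2, dw_one_inv]
      exact FractionalIdeal.one_mem_one D⁰
    have h1 : (1 : FractionRing D) ∈ tClos D (M : FractionalIdeal D⁰ (FractionRing D)) := by
      have hle := le_iSup₂ (f := fun (F : FractionalIdeal D⁰ (FractionRing D)) (_ : F ∈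
          {F : FractionalIdeal D⁰ (FractionRing D) |
            F ≠ 0 ∧ F ≤ (M : FractionalIdeal D⁰ (FractionRing D)) ∧
            (F : Submodule D (FractionRing D)).FG}) =>
          (((F⁻¹)⁻¹ : FractionalIdeal D⁰ (FractionRing D)) : Submodule D (FractionRing D)))
        (J : FractionalIdeal D⁰ (FractionRing D))
        ⟨FractionalIdeal.coeIdeal_ne_zero.mpr hJ.1,
          (FractionalIdeal.coeIdeal_le_coeIdeal _).mpr hJM,
          (FractionalIdeal.coeIdeal_fg D⁰ dw_inj J).mpr hJ.2.1⟩
      exact hle (FractionalIdeal.mem_coe.mpr hmem)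
    rw [← hT] at h1
    obtain ⟨a, ha, ha1⟩ := (FractionalIdeal.mem_coeIdeal D⁰).mp
      (FractionalIdeal.mem_coe.mp h1)
    have : a = 1 := dw_inj (by rw [ha1, map_one])
    exact hMmax.ne_top (Ideal.eq_top_of_isUnit_mem M ha (this ▸ isUnit_one))
  tfae_have 5 → 1 := by
    intro h E _
    refine subset_antisymm (dw_subset_wClos E) ?_
    rintro x ⟨J, hJgv, hx⟩
    have hJtop := h J hJgv
    have := hx 1 (hJtop ▸ Submodule.mem_top)
    rw [map_one, one_mul] at this
    exact FractionalIdeal.mem_coe.mpr this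
  tfae_finish
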